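/- For every n ≥ 1, the number of revised ascent sequences of length n avoiding the pattern 231 equals 2^{n−1} − n + 1. -/

import Mathlib

/-- An endofunction of size `n`: values in `{1,…,n}` (indices are `Fin n`, 0-based). -/
def IsEndo (n : ℕ) (x : Fin n → ℕ) : Prop := ∀ i, 1 ≤ x i ∧ x i ≤ n

/-- The maximum value of `x`. -/
def maxVal (n : ℕ) (x : Fin n → ℕ) : ℕ := Finset.univ.sup x

/-- A Cayley permutation: an endofunction whose image is `{1,…,max x}`. -/
def IsCayley (n : ℕ) (x : Fin n → ℕ) : Prop :=
  IsEndo n x ∧ ∀ v, 1 ≤ v → v ≤ maxVal n x → ∃ i, x i = v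

/-- Ascent bottoms (0-based; index 0 always included). -/
def Ascbot (n : ℕ) (x : Fin n → ℕ) : Set (Fin n) :=
  {i | i.1 = 0 ∨ ∃ h : i.1 + 1 < n, x i < x ⟨i.1 + 1, h⟩}

/-- Indices of leftmost occurrences of values. -/
def Nub (n : ℕ) (x : Fin n → ℕ) : Set (Fin n) :=
  {i | ∀ j, j < i → x j ≠ x i}

/-- A revised ascent sequence. -/
def IsRAS (n : ℕ) (x : Fin n → ℕ) : Prop :=
  IsCayley n x ∧ Ascbot n x = Nub n x

/-- `x` avoids the pattern `231`. -/
def Avoids231 (n : ℕ) (x : Fin n → ℕ) : Prop :=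
  ¬ ∃ i j k : Fin n, i < j ∧ j < k ∧ x k < x i ∧ x i < x j

namespace Stmt13

variable {n : ℕ}

/-- number of elements of `S` that are `≤ i`. -/
def rank (S : Finset (Fin n)) (i : Fin n) : ℕ := (S.filter fun j => j ≤ i).card

/-- the candidate sequence attached to a subset `S`. -/
def seqOf (S : Finset (Fin n)) : Fin n → ℕ :=
  fun i => if i ∈ S then rank S i
    else if ∃ j ∈ S, i < j then S.card
    else max (S.card - 1) 1

lemma rank_pos {S : Finset (Fin n)} {i : Fin n} (hi : i ∈ S) : 1 ≤ rank S i := by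
  have : i ∈ S.filter fun j => j ≤ i := Finset.mem_filter.2 ⟨hi, le_refl i⟩
  exact Finset.card_pos.2 ⟨i, this⟩

lemma rank_le (S : Finset (Fin n)) (i : Fin n) : rank S i ≤ S.card :=
  Finset.card_le_card (Finset.filter_subset _ _)

lemma rank_lt_rank {S : Finset (Fin n)} {i j : Fin n} (hj : j ∈ S) (hij : i < j) :
    rank S i < rank S j := by
  apply Finset.card_lt_card
  constructor
  · intro a ha
    rcases Finset.mem_filter.1 ha with ⟨h1, h2⟩
    exact Finset.mem_filter.2 ⟨h1, le_of_lt (lt_of_le_of_lt h2 hij)⟩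
  · intro hsub
    have : j ∈ S.filter fun k => k ≤ i := hsub (Finset.mem_filter.2 ⟨hj, le_refl j⟩)
    exact absurd (Finset.mem_filter.1 this).2 (not_le.2 hij)

lemma rank_max' {S : Finset (Fin n)} (hS : S.Nonempty) : rank S (S.max' hS) = S.card := by
  unfold rank
  congr 1
  apply Finset.filter_true_of_mem
  intro a ha
  exact S.le_max' a ha

lemma rank_injOn {S : Finset (Fin n)} {i j : Fin n} (hi : i ∈ S) (hj : j ∈ S)
    (h : rank S i = rank S j) : i = j := by
  rcases lt_trichotomy i j with h' | h' | h'
  · exact absurd h (ne_of_lt (rank_lt_rank hj h'))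
  · exact h'
  · exact absurd h.symm (ne_of_lt (rank_lt_rank hi h'))

lemma rank_surj {S : Finset (Fin n)} {v : ℕ} (hv1 : 1 ≤ v) (hv2 : v ≤ S.card) :
    ∃ i ∈ S, rank S i = v := by
  have himg : S.image (rank S) = Finset.Icc 1 S.card := by
    apply Finset.eq_of_subset_of_card_le
    · intro a ha
      rcases Finset.mem_image.1 ha with ⟨i, hi, rfl⟩
      exact Finset.mem_Icc.2 ⟨rank_pos hi, rank_le S i⟩
    · rw [Nat.card_Icc]
      rw [Finset.card_image_of_injOn (fun i hi j hj => rank_injOn hi hj)]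
      omega
  have : v ∈ S.image (rank S) := by
    rw [himg]; exact Finset.mem_Icc.2 ⟨hv1, hv2⟩
  rcases Finset.mem_image.1 this with ⟨i, hi, h⟩
  exact ⟨i, hi, h⟩

lemma rank_lt_of_ne_max {S : Finset (Fin n)} (hS : S.Nonempty) {i : Fin n} (hi : i ∈ S)
    (hne : i ≠ S.max' hS) : rank S i < S.card := by
  have : i < S.max' hS := lt_of_le_of_ne (S.le_max' i hi) hne
  calc rank S i < rank S (S.max' hS) := rank_lt_rank (S.max'_mem hS) this
  _ = S.card := rank_max' hS

end Stmt13

namespace Stmt13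
section Forward

variable {n : ℕ} {S : Finset (Fin n)}

lemma seq_mem {i : Fin n} (hi : i ∈ S) : seqOf S i = rank S i := if_pos hi

lemma seq_lo (hS : S.Nonempty) {i : Fin n} (hi : i ∉ S) (h : i < S.max' hS) :
    seqOf S i = S.card := by
  unfold seqOf
  rw [if_neg hi, if_pos ⟨S.max' hS, S.max'_mem hS, h⟩]

lemma seq_hi (hS : S.Nonempty) {i : Fin n} (hi : i ∉ S) (h : ¬ i < S.max' hS) :
    seqOf S i = max (S.card - 1) 1 := by
  unfold seqOf
  rw [if_neg hi, if_neg]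
  rintro ⟨j, hj, hij⟩
  exact h (lt_of_lt_of_le hij (S.le_max' j hj))

lemma seq_hi2 (hm : 2 ≤ S.card) (hS : S.Nonempty) {i : Fin n} (hi : i ∉ S)
    (h : ¬ i < S.max' hS) : seqOf S i = S.card - 1 := by
  rw [seq_hi hS hi h, Nat.max_eq_left (by omega)]

lemma seq_le (hS : 2 ≤ S.card) (i : Fin n) : seqOf S i ≤ S.card := by
  have hne : S.Nonempty := Finset.card_pos.1 (by omega)
  by_cases hi : i ∈ S
  · rw [seq_mem hi]; exact rank_le S i
  · by_cases h : i < S.max' hne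
    · rw [seq_lo hne hi h]
    · rw [seq_hi hne hi h]; omega

lemma seq_ge (hS : 2 ≤ S.card) (i : Fin n) : 1 ≤ seqOf S i := by
  have hne : S.Nonempty := Finset.card_pos.1 (by omega)
  by_cases hi : i ∈ S
  · rw [seq_mem hi]; exact rank_pos hi
  · by_cases h : i < S.max' hne
    · rw [seq_lo hne hi h]; omega
    · rw [seq_hi hne hi h]; omega

variable (hS0 : ∀ i ∈ S, 0 < i.1) (hm : 2 ≤ S.card)

include hS0 hm

lemma seq_zero {i : Fin n} (hi : i.1 = 0) : seqOf S i = S.card := by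
  have hne : S.Nonempty := Finset.card_pos.1 (by omega)
  have hq := S.max'_mem hne
  have h0 : i ∉ S := fun h => by have := hS0 i h; omega
  exact seq_lo hne h0 (by rw [Fin.lt_def, hi]; exact hS0 _ hq)

lemma seq_maxVal : maxVal n (seqOf S) = S.card := by
  have hne : S.Nonempty := Finset.card_pos.1 (by omega)
  obtain ⟨j, _⟩ := hne
  have hn : 0 < n := lt_of_le_of_lt (Nat.zero_le _) j.2
  apply le_antisymm
  · exact Finset.sup_le (fun i _ => seq_le hm i)
  · have h0 : seqOf S ⟨0, hn⟩ = S.card := seq_zero hS0 hm rfl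
    rw [← h0]; exact Finset.le_sup (Finset.mem_univ _)

/-- characterization of Nub of `seqOf S`. -/
lemma seq_nub_iff (i : Fin n) :
    (∀ j, j < i → seqOf S j ≠ seqOf S i) ↔
      (i.1 = 0 ∨ (i ∈ S ∧ i ≠ S.max' (Finset.card_pos.1 (by omega)))) := by
  have hne : S.Nonempty := Finset.card_pos.1 (by omega)
  set q := S.max' hne with hqdef
  have hn : 0 < n := lt_of_le_of_lt (Nat.zero_le _) i.2
  have hi0 : (⟨0, hn⟩ : Fin n) ∉ S := fun h => by have := hS0 _ h; simp at this
  have h0v : seqOf S (⟨0, hn⟩ : Fin n) = S.card := seq_zero hS0 hm rfl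
  constructor
  · intro hnub
    by_cases hz : i.1 = 0
    · exact Or.inl hz
    · right
      have h0i : (⟨0, hn⟩ : Fin n) < i := by
        rw [Fin.lt_def]
        have hz0 : (⟨0, hn⟩ : Fin n).1 = 0 := rfl
        omega
      by_cases hi : i ∈ S
      · refine ⟨hi, fun hiq => ?_⟩
        have : seqOf S i = S.card := by
          rw [seq_mem hi, hiq, rank_max' hne]
        exact hnub ⟨0, hn⟩ h0i (by rw [h0v, this])
      · exfalso
        by_cases hlt : i < q
        · exact hnub ⟨0, hn⟩ h0i (by rw [h0v, seq_lo hne hi hlt])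
        · -- i beyond the max: value S.card - 1, occurs earlier inside S
          obtain ⟨j, hj, hrj⟩ := rank_surj (S := S) (v := S.card - 1) (by omega) (by omega)
          have hji : j < i := by
            have := S.le_max' j hj
            have hne2 : j ≠ i := fun h => hi (h ▸ hj)
            have : j ≤ i := le_trans this (not_lt.1 hlt)
            exact lt_of_le_of_ne this hne2
          refine hnub j hji ?_
          rw [seq_mem hj, hrj, seq_hi2 hm hne hi hlt]
  · intro h j hji
    rcases h with hz | ⟨hi, hiq⟩
    · exfalso; rw [Fin.lt_def, hz] at hji; omega
    · -- i is a non-max element of S: value rank S i < card, all earlier values differ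
      have hri : seqOf S i = rank S i := seq_mem hi
      have hrlt : rank S i < S.card := rank_lt_of_ne_max hne hi hiq
      by_cases hjS : j ∈ S
      · rw [hri, seq_mem hjS]
        exact fun h => absurd (rank_injOn hjS hi h) (ne_of_lt hji)
      · have hjq : j < q := lt_of_lt_of_le hji (S.le_max' i hi)
        rw [hri, seq_lo hne hjS hjq]
        omega

/-- characterization of Ascbot of `seqOf S`. -/
lemma seq_asc_iff (i : Fin n) :
    (i.1 = 0 ∨ ∃ h : i.1 + 1 < n, seqOf S i < seqOf S ⟨i.1 + 1, h⟩) ↔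
      (i.1 = 0 ∨ (i ∈ S ∧ i ≠ S.max' (Finset.card_pos.1 (by omega)))) := by
  have hne : S.Nonempty := Finset.card_pos.1 (by omega)
  set q := S.max' hne with hqdef
  constructor
  · rintro (hz | ⟨h, hasc⟩)
    · exact Or.inl hz
    · right
      by_cases hi : i ∈ S
      · refine ⟨hi, fun hiq => ?_⟩
        have hvi : seqOf S i = S.card := by rw [seq_mem hi, hiq, rank_max' hne]
        have hle := seq_le hm (⟨i.1 + 1, h⟩ : Fin n)
        omega
      · exfalso
        by_cases hlt : i < q
        · have hvi : seqOf S i = S.card := seq_lo hne hi hlt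
          have hle := seq_le hm (⟨i.1 + 1, h⟩ : Fin n)
          omega
        · -- i ≥ q, i ∉ S; then also i+1 ∉ S and i+1 > q, both values card-1
          have hqi : q ≤ i := not_lt.1 hlt
          have hsucc : ¬ (⟨i.1 + 1, h⟩ : Fin n) < q := by
            rw [Fin.lt_def]
            have hv : (⟨i.1 + 1, h⟩ : Fin n).1 = i.1 + 1 := rfl
            have : q.1 ≤ i.1 := hqi
            omega
          have hsuccS : (⟨i.1 + 1, h⟩ : Fin n) ∉ S := by
            intro hmem
            have hle2 := S.le_max' _ hmem
            rw [Fin.le_def] at hle2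
            have hv : (⟨i.1 + 1, h⟩ : Fin n).1 = i.1 + 1 := rfl
            have : q.1 ≤ i.1 := hqi
            omega
          rw [seq_hi2 hm hne hi hlt, seq_hi2 hm hne hsuccS hsucc] at hasc
          exact lt_irrefl _ hasc
  · rintro (hz | ⟨hi, hiq⟩)
    · exact Or.inl hz
    · right
      have hiltq : i < q := lt_of_le_of_ne (S.le_max' i hi) hiq
      have h : i.1 + 1 < n := by
        have h1 : i.1 < q.1 := hiltq
        have h2 : q.1 < n := q.2
        omega
      refine ⟨h, ?_⟩
      have hri : seqOf S i = rank S i := seq_mem hi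
      have hrlt : rank S i < S.card := rank_lt_of_ne_max hne hi hiq
      set i' : Fin n := ⟨i.1 + 1, h⟩ with hi'def
      have hii' : i < i' := by rw [Fin.lt_def]; simp [hi'def]
      by_cases hi' : i' ∈ S
      · rw [hri, seq_mem hi']
        exact rank_lt_rank hi' hii'
      · have hi'q : i' < q := by
          have h1 : i'.1 ≤ q.1 := by
            have : i.1 < q.1 := hiltq
            simp [hi'def]; omega
          have h2 : i' ≠ q := fun hh => hi' (hh ▸ S.max'_mem hne)
          exact lt_of_le_of_ne (Fin.le_def.2 h1) h2
        rw [hri, seq_lo hne hi' hi'q]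
        omega

omit hS0 in
lemma seq_avoids : Avoids231 n (seqOf S) := by
  have hne : S.Nonempty := Finset.card_pos.1 (by omega)
  set q := S.max' hne with hqdef
  rintro ⟨i, j, k, hij, hjk, h1, h2⟩
  have hjle := seq_le hm j
  by_cases hi : i ∈ S
  · rw [seq_mem hi] at h1 h2
    have hine : rank S i < S.card := by omega
    -- x k < rank S i ≤ card - 1, so x k ≤ card - 2, so k ∈ S
    by_cases hk : k ∈ S
    · rw [seq_mem hk] at h1
      have : rank S i < rank S k := rank_lt_rank hk (lt_trans hij hjk)
      omega
    · by_cases hlt : k < q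
      · rw [seq_lo hne hk hlt] at h1
        have := rank_le S i
        omega
      · rw [seq_hi2 hm hne hk hlt] at h1
        omega
  · by_cases hlt : i < q
    · rw [seq_lo hne hi hlt] at h2
      omega
    · -- i beyond max: x i = card - 1, so x j = card, but j > i > q
      have hqi : q < i := lt_of_le_of_ne (not_lt.1 hlt) (fun hh => hi (hh ▸ S.max'_mem hne))
      have hjS : j ∉ S := fun hmem => absurd (S.le_max' j hmem) (not_le.2 (lt_trans hqi hij))
      have hjq : ¬ j < q := not_lt.2 (le_of_lt (lt_trans hqi hij))
      rw [seq_hi2 hm hne hi hlt, seq_hi2 hm hne hjS hjq] at h2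
      exact lt_irrefl _ h2

lemma seq_isRAS : IsRAS n (seqOf S) := by
  have hne : S.Nonempty := Finset.card_pos.1 (by omega)
  refine ⟨⟨fun i => ⟨seq_ge hm i, ?_⟩, fun v hv1 hv2 => ?_⟩, ?_⟩
  · calc seqOf S i ≤ S.card := seq_le hm i
    _ ≤ Finset.univ.card := Finset.card_le_univ S
    _ = n := Finset.card_fin n
  · rw [seq_maxVal hS0 hm] at hv2
    obtain ⟨i, hi, hri⟩ := rank_surj hv1 hv2
    exact ⟨i, by rw [seq_mem hi, hri]⟩
  · ext i
    rw [Ascbot, Nub, Set.mem_setOf_eq, Set.mem_setOf_eq,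
      seq_asc_iff hS0 hm i, seq_nub_iff hS0 hm i]

end Forward

section ForwardEmpty

variable {n : ℕ}

lemma seq_empty : seqOf (∅ : Finset (Fin n)) = fun _ => 1 := by
  funext i
  unfold seqOf
  simp

lemma seq_empty_isRAS (hn : 1 ≤ n) : IsRAS n (seqOf (∅ : Finset (Fin n))) := by
  rw [seq_empty]
  have h0 : (⟨0, hn⟩ : Fin n) ∈ Finset.univ := Finset.mem_univ _
  have hmax : maxVal n (fun _ : Fin n => 1) = 1 := by
    apply le_antisymm
    · exact Finset.sup_le (fun i _ => le_refl 1)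
    · exact Finset.le_sup (f := fun _ : Fin n => (1:ℕ)) h0
  refine ⟨⟨fun i => ⟨le_refl 1, hn⟩, fun v hv1 hv2 => ?_⟩, ?_⟩
  · rw [hmax] at hv2
    exact ⟨⟨0, hn⟩, by show (1:ℕ) = v; omega⟩
  · ext i
    simp only [Ascbot, Nub, Set.mem_setOf_eq]
    constructor
    · rintro (hz | ⟨h, hlt⟩)
      · intro j hj
        rw [Fin.lt_def, hz] at hj
        omega
      · omega
    · intro hnub
      left
      by_contra hz
      refine hnub ⟨0, hn⟩ ?_ rfl
      rw [Fin.lt_def]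
      have hz0 : (⟨0, hn⟩ : Fin n).1 = 0 := rfl
      omega

lemma seq_empty_avoids : Avoids231 n (seqOf (∅ : Finset (Fin n))) := by
  rw [seq_empty]
  rintro ⟨i, j, k, _, _, _, h2⟩
  simp at h2

end ForwardEmpty
end Stmt13

namespace Stmt13
section Backward

variable {n : ℕ} {x : Fin n → ℕ}

/-- abbreviation for the nub predicate -/
def nubP (x : Fin n → ℕ) (i : Fin n) : Prop := ∀ j, j < i → x j ≠ x i

variable (hend : IsEndo n x) (hsurj : ∀ v, 1 ≤ v → v ≤ maxVal n x → ∃ i, x i = v)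
  (hAN : Ascbot n x = Nub n x) (hav : Avoids231 n x)

lemma x_le_max (i : Fin n) : x i ≤ maxVal n x := Finset.le_sup (Finset.mem_univ i)

include hAN in
/-- a leftmost occurrence at a positive position is followed by a strictly larger value -/
lemma nub_asc {i : Fin n} (hnub : nubP x i) (hi : i.1 ≠ 0) :
    ∃ h : i.1 + 1 < n, x i < x ⟨i.1 + 1, h⟩ := by
  have hmem : i ∈ Nub n x := hnub
  rw [← hAN] at hmem
  rcases hmem with hz | h
  · exact absurd hz hi
  · exact h

include hAN in
/-- ascent bottoms are leftmost occurrences -/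
lemma asc_nub {i : Fin n} (h : i.1 + 1 < n) (hlt : x i < x ⟨i.1 + 1, h⟩) : nubP x i := by
  have hmem : i ∈ Ascbot n x := Or.inr ⟨h, hlt⟩
  rw [hAN] at hmem
  exact hmem

include hend hAN in
/-- the maximum value occurs at position 0 -/
lemma max_at_zero {i : Fin n} (hnub : nubP x i) (hxi : x i = maxVal n x) : i.1 = 0 := by
  by_contra hi
  obtain ⟨h, hlt⟩ := nub_asc hAN hnub hi
  have := x_le_max (x := x) ⟨i.1 + 1, h⟩
  omega

include hend hAN hav in
/-- leftmost occurrences at positive positions appear in increasing order of value -/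
lemma nub_mono {i j : Fin n} (hnubi : nubP x i) (hnubj : nubP x j)
    (hi : i.1 ≠ 0) (hij : i < j) : x i < x j := by
  have hne : x i ≠ x j := fun h => hnubj i hij h
  rcases lt_or_gt_of_ne hne with h | h
  · exact h
  · exfalso
    obtain ⟨hsn, hlt⟩ := nub_asc hAN hnubi hi
    set i' : Fin n := ⟨i.1 + 1, hsn⟩ with hi'
    have hii' : i < i' := by rw [Fin.lt_def]; simp [hi']
    rcases lt_trichotomy i' j with h1 | h1 | h1
    · exact hav ⟨i, i', j, hii', h1, h, hlt⟩
    · rw [h1] at hlt; omega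
    · rw [Fin.lt_def] at h1 hij
      have : i'.1 = i.1 + 1 := rfl
      omega

include hAN in
/-- if the value rises from `i` to `j`, some index in `[i, j)` with value `≤ x i`
    is a leftmost occurrence -/
lemma exists_nub_between {i j : Fin n} (hij : i < j) (hv : x i < x j) :
    ∃ t : Fin n, i ≤ t ∧ t < j ∧ x t ≤ x i ∧ nubP x t := by
  classical
  set T := Finset.univ.filter (fun t : Fin n => i ≤ t ∧ t < j ∧ x t ≤ x i) with hT
  have hTne : T.Nonempty := ⟨i, by simp [hT, le_refl, hij]⟩
  set t := T.max' hTne with ht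
  have htT : t ∈ T := T.max'_mem hTne
  rw [hT, Finset.mem_filter] at htT
  obtain ⟨-, hit, htj, hvt⟩ := htT
  have hsn : t.1 + 1 < n := by
    have h1 : t.1 < j.1 := htj
    have h2 : j.1 < n := j.2
    omega
  set t' : Fin n := ⟨t.1 + 1, hsn⟩ with ht'
  have htt' : t < t' := by rw [Fin.lt_def]; simp [ht']
  have hasc : x t < x t' := by
    rcases lt_trichotomy t' j with h1 | h1 | h1
    · -- t' still strictly before j: by maximality x t' > x i
      by_contra hcon
      have ht'T : t' ∈ T := by
        rw [hT, Finset.mem_filter]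
        exact ⟨Finset.mem_univ _, le_of_lt (lt_of_le_of_lt hit htt'), h1, by omega⟩
      have := T.le_max' t' ht'T
      rw [← ht] at this
      exact absurd htt' (not_lt.2 this)
    · rw [h1]; omega
    · rw [Fin.lt_def] at h1 htj
      have : t'.1 = t.1 + 1 := rfl
      omega
  exact ⟨t, hit, htj, hvt, asc_nub hAN hsn hasc⟩

end Backward
end Stmt13

namespace Stmt13
section Backward2

variable {n : ℕ} {x : Fin n → ℕ}

/-- position of the leftmost occurrence of `v` -/
def firstPos (x : Fin n → ℕ) (v : ℕ) (h : ∃ i, x i = v) : Fin n :=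
  (Finset.univ.filter fun i => x i = v).min'
    ⟨h.choose, by simp [h.choose_spec]⟩

lemma fp_val {v : ℕ} (h : ∃ i, x i = v) : x (firstPos x v h) = v := by
  have := Finset.min'_mem (Finset.univ.filter fun i => x i = v)
    ⟨h.choose, by simp [h.choose_spec]⟩
  rw [Finset.mem_filter] at this
  exact this.2

lemma fp_min {v : ℕ} (h : ∃ i, x i = v) {i : Fin n} (hi : x i = v) :
    firstPos x v h ≤ i :=
  Finset.min'_le _ i (by simp [hi])

lemma fp_nub {v : ℕ} (h : ∃ i, x i = v) : nubP x (firstPos x v h) := by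
  intro j hj heq
  rw [fp_val h] at heq
  exact absurd (fp_min h heq) (not_le.2 hj)

lemma nub_eq_fp {i : Fin n} (hnub : nubP x i) : i = firstPos x (x i) ⟨i, rfl⟩ := by
  have h1 : firstPos x (x i) ⟨i, rfl⟩ ≤ i := fp_min _ rfl
  rcases lt_or_eq_of_le h1 with h | h
  · exact absurd (fp_val ⟨i, rfl⟩) (hnub _ h)
  · exact h.symm

variable (hend : IsEndo n x) (hsurj : ∀ v, 1 ≤ v → v ≤ maxVal n x → ∃ i, x i = v)
  (hAN : Ascbot n x = Nub n x) (hav : Avoids231 n x)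

include hend hAN in
/-- `x` takes the value `maxVal` at position `0` -/
lemma val_zero {i : Fin n} (hi : i.1 = 0) : x i = maxVal n x := by
  have hex : ∃ j, x j = maxVal n x := by
    obtain ⟨j, -, hj⟩ := Finset.exists_mem_eq_sup Finset.univ
      ⟨i, Finset.mem_univ i⟩ x
    exact ⟨j, hj.symm⟩
  have hz := max_at_zero hend hAN (fp_nub hex) (fp_val hex)
  have : i = firstPos x (maxVal n x) hex := Fin.ext (by omega)
  rw [this, fp_val hex]

include hend hAN in
lemma fp_pos {v : ℕ} (hex : ∃ i, x i = v) (hv : v < maxVal n x) :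
    (firstPos x v hex).1 ≠ 0 := by
  intro h0
  have := val_zero hend hAN (i := firstPos x v hex) h0
  rw [fp_val hex] at this
  omega

include hend hAN hav in
lemma fp_strict_mono {v w : ℕ} (hexv : ∃ i, x i = v) (hexw : ∃ i, x i = w)
    (hvw : v < w) (hwm : w < maxVal n x) : firstPos x v hexv < firstPos x w hexw := by
  have hvm : v < maxVal n x := lt_trans hvw hwm
  have hne : firstPos x v hexv ≠ firstPos x w hexw := by
    intro h
    have := fp_val hexv
    rw [h, fp_val hexw] at this
    omega
  rcases lt_or_gt_of_ne hne with h | h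
  · exact h
  · exfalso
    have := nub_mono hend hAN hav (fp_nub hexw) (fp_nub hexv)
      (fp_pos hend hAN hexw hwm) h
    rw [fp_val hexw, fp_val hexv] at this
    omega

include hend hAN hav in
lemma fp_mono_le {v w : ℕ} (hexv : ∃ i, x i = v) (hexw : ∃ i, x i = w)
    (hvw : v ≤ w) (hwm : w < maxVal n x) : firstPos x v hexv ≤ firstPos x w hexw := by
  rcases lt_or_eq_of_le hvw with h | h
  · exact le_of_lt (fp_strict_mono hend hAN hav hexv hexw h hwm)
  · subst h; exact le_refl _

include hend hsurj hAN hav in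
/-- every repeated value is at least `maxVal - 1` -/
lemma repeat_big {i : Fin n} (hi : ¬ nubP x i) : maxVal n x ≤ x i + 1 := by
  by_contra hcon
  push_neg at hcon
  set m := maxVal n x with hm
  set v := x i with hv
  have hv1 : 1 ≤ v := (hend i).1
  have hexv : ∃ j, x j = v := ⟨i, rfl⟩
  have hexw : ∃ j, x j = v + 1 := hsurj (v + 1) (by omega) (by omega)
  set p := firstPos x (v+1) hexw with hp
  have hppos : p.1 ≠ 0 := fp_pos hend hAN hexw (by omega)
  have hpval : x p = v + 1 := fp_val hexw
  have hpnub : nubP x p := fp_nub hexw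
  obtain ⟨hsn, hasc⟩ := nub_asc hAN hpnub hppos
  set p' : Fin n := ⟨p.1 + 1, hsn⟩ with hp'
  have hpne : p ≠ i := fun h => by rw [h, hv] at hpval; omega
  rcases lt_or_gt_of_ne hpne with hpi | hip
  · -- p before i
    rcases lt_trichotomy p' i with h1 | h1 | h1
    · have hpp' : p < p' := by rw [Fin.lt_def]; simp [hp']
      exact hav ⟨p, p', i, hpp', h1, by omega, hasc⟩
    · rw [h1] at hasc; omega
    · rw [Fin.lt_def] at h1 hpi
      have : p'.1 = p.1 + 1 := rfl
      omega
  · -- i before p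
    obtain ⟨t, hit, htp, htv, htnub⟩ := exists_nub_between hAN hip (by omega)
    have ht1 : 1 ≤ x t := (hend t).1
    have hfpv : firstPos x v hexv < i := by
      rcases lt_or_eq_of_le (fp_min hexv (show x i = v from rfl)) with h | h
      · exact h
      · exact absurd (h ▸ fp_nub hexv) hi
    have := fp_mono_le hend hAN hav ⟨t, rfl⟩ hexv htv (by omega)
    rw [← nub_eq_fp htnub] at this
    have h1 : t.1 < i.1 := lt_of_le_of_lt (Fin.le_def.1 this) (Fin.lt_def.1 hfpv)
    have h2 : i.1 ≤ t.1 := Fin.le_def.1 hit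
    omega

end Backward2
end Stmt13

namespace Stmt13
section Backward3

variable {n : ℕ} {x : Fin n → ℕ}

/-- position of the rightmost occurrence of the maximum -/
def lastM (x : Fin n → ℕ) (h : ∃ i, x i = maxVal n x) : Fin n :=
  (Finset.univ.filter fun i => x i = maxVal n x).max'
    ⟨h.choose, by simp [h.choose_spec]⟩

lemma lm_val (h : ∃ i, x i = maxVal n x) : x (lastM x h) = maxVal n x := by
  have := Finset.max'_mem (Finset.univ.filter fun i => x i = maxVal n x)
    ⟨h.choose, by simp [h.choose_spec]⟩
  rw [Finset.mem_filter] at this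
  exact this.2

lemma lm_max (h : ∃ i, x i = maxVal n x) {i : Fin n} (hi : x i = maxVal n x) :
    i ≤ lastM x h :=
  Finset.le_max' _ i (by simp [hi])

variable (hend : IsEndo n x) (hsurj : ∀ v, 1 ≤ v → v ≤ maxVal n x → ∃ i, x i = v)
  (hAN : Ascbot n x = Nub n x) (hav : Avoids231 n x)

include hend hsurj hAN hav in
lemma fp_lt_lm (hm2 : 2 ≤ maxVal n x) {v : ℕ} (hexv : ∃ i, x i = v)
    (hexm : ∃ i, x i = maxVal n x) (h1 : 1 ≤ v) (hv : v < maxVal n x) :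
    firstPos x v hexv < lastM x hexm := by
  have hexw : ∃ i, x i = maxVal n x - 1 := hsurj _ (by omega) (by omega)
  have hppos : (firstPos x (maxVal n x - 1) hexw).1 ≠ 0 :=
    fp_pos hend hAN hexw (by omega)
  obtain ⟨hsn, hasc⟩ := nub_asc hAN (fp_nub hexw) hppos
  have hpval : x (firstPos x (maxVal n x - 1) hexw) = maxVal n x - 1 := fp_val hexw
  have hle' := x_le_max (x := x) ⟨(firstPos x (maxVal n x - 1) hexw).1 + 1, hsn⟩
  have hp'val : x ⟨(firstPos x (maxVal n x - 1) hexw).1 + 1, hsn⟩ = maxVal n x := by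
    omega
  have h3 := lm_max hexm hp'val
  rw [Fin.le_def] at h3
  have hv2 : (⟨(firstPos x (maxVal n x - 1) hexw).1 + 1, hsn⟩ : Fin n).1
      = (firstPos x (maxVal n x - 1) hexw).1 + 1 := rfl
  have hmono := fp_mono_le hend hAN hav hexv hexw (by omega) (by omega)
  rw [Fin.lt_def]
  rw [Fin.le_def] at hmono
  omega

include hend hsurj hAN hav in
lemma before_lm (hm2 : 2 ≤ maxVal n x) (hexm : ∃ i, x i = maxVal n x) {i : Fin n}
    (hi : i < lastM x hexm) (hnn : ¬ nubP x i) : x i = maxVal n x := by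
  set m := maxVal n x with hm
  have hbig := repeat_big hend hsurj hAN hav hnn
  have hle := x_le_max (x := x) i
  rcases (by omega : x i = m ∨ x i = m - 1) with h | h
  · exact h
  · exfalso
    have hlmval : x (lastM x hexm) = m := lm_val hexm
    obtain ⟨t, hit, htl, htv, htnub⟩ := exists_nub_between hAN hi (by omega)
    have hexw : ∃ j, x j = m - 1 := ⟨i, h⟩
    have hfplt : firstPos x (m-1) hexw < i := by
      rcases lt_or_eq_of_le (fp_min hexw h) with h' | h'
      · exact h'
      · exact absurd (h' ▸ fp_nub hexw) hnn
    have hmono := fp_mono_le hend hAN hav ⟨t, rfl⟩ hexw (by omega) (by omega)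
    rw [← nub_eq_fp htnub] at hmono
    have h1 : t.1 < i.1 := lt_of_le_of_lt (Fin.le_def.1 hmono) (Fin.lt_def.1 hfplt)
    have h2 : i.1 ≤ t.1 := Fin.le_def.1 hit
    omega

include hend hsurj hAN hav in
lemma after_lm (hm2 : 2 ≤ maxVal n x) (hexm : ∃ i, x i = maxVal n x) {i : Fin n}
    (hi : lastM x hexm < i) : x i = maxVal n x - 1 := by
  set m := maxVal n x with hm
  have hle := x_le_max (x := x) i
  have hne : x i ≠ m := fun h => absurd (lm_max hexm h) (not_le.2 hi)
  by_cases hnub : nubP x i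
  · exfalso
    have h1 : 1 ≤ x i := (hend i).1
    have hlt := fp_lt_lm hend hsurj hAN hav hm2 ⟨i, rfl⟩ hexm h1 (by omega)
    rw [← nub_eq_fp hnub] at hlt
    exact absurd (lt_trans hlt hi) (lt_irrefl i)
  · have := repeat_big hend hsurj hAN hav hnub
    omega

end Backward3
end Stmt13

namespace Stmt13
section Backward4

variable {n : ℕ} {x : Fin n → ℕ}

variable (hend : IsEndo n x) (hsurj : ∀ v, 1 ≤ v → v ≤ maxVal n x → ∃ i, x i = v)
  (hAN : Ascbot n x = Nub n x) (hav : Avoids231 n x)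

include hend hsurj hAN hav in
lemma bwd_main (hm2 : 2 ≤ maxVal n x) (hexm : ∃ i, x i = maxVal n x) :
    ∃ S : Finset (Fin n), (∀ i ∈ S, 0 < i.1) ∧ 2 ≤ S.card ∧ x = seqOf S := by
  classical
  set m := maxVal n x with hm
  set q := lastM x hexm with hq
  have hqval : x q = m := lm_val hexm
  set N := Finset.univ.filter (fun i : Fin n => nubP x i ∧ i.1 ≠ 0) with hN
  have hmemN : ∀ i, i ∈ N ↔ nubP x i ∧ i.1 ≠ 0 := by
    intro i; simp [hN]
  have hex1 : ∃ i, x i = 1 := hsurj 1 (le_refl 1) (by omega)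
  have hq_pos : q.1 ≠ 0 := by
    have h := fp_lt_lm hend hsurj hAN hav hm2 hex1 hexm (le_refl 1) (by omega)
    rw [Fin.lt_def] at h
    omega
  -- values of N elements
  have hNval : ∀ i ∈ N, 1 ≤ x i ∧ x i < m := by
    intro i hi
    rw [hmemN] at hi
    refine ⟨(hend i).1, ?_⟩
    have hle := x_le_max (x := x) i
    rcases lt_or_eq_of_le hle with h | h
    · exact h
    · exact absurd (max_at_zero hend hAN hi.1 h) hi.2
  have hqN : q ∉ N := by
    rw [hmemN]
    rintro ⟨hnub, -⟩
    exact hq_pos (max_at_zero hend hAN hnub hqval)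
  -- each element of N is before q
  have hNq : ∀ i ∈ N, i < q := by
    intro i hi
    have hv := hNval i hi
    rw [hmemN] at hi
    have h := fp_lt_lm hend hsurj hAN hav hm2 ⟨i, rfl⟩ hexm hv.1 hv.2
    rwa [← nub_eq_fp hi.1] at h
  set S := insert q N with hS
  have hS0 : ∀ i ∈ S, 0 < i.1 := by
    intro i hi
    rw [hS, Finset.mem_insert] at hi
    rcases hi with rfl | hi
    · omega
    · rw [hmemN] at hi; omega
  -- the image of N under x is exactly [1, m-1]
  have himgN : N.image x = Finset.Icc 1 (m - 1) := by
    apply Finset.Subset.antisymm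
    · intro v hv
      rcases Finset.mem_image.1 hv with ⟨i, hi, rfl⟩
      have := hNval i hi
      rw [Finset.mem_Icc]
      omega
    · intro v hv
      rw [Finset.mem_Icc] at hv
      have hexv : ∃ i, x i = v := hsurj v hv.1 (by omega)
      refine Finset.mem_image.2 ⟨firstPos x v hexv, ?_, fp_val hexv⟩
      rw [hmemN]
      exact ⟨fp_nub hexv, fp_pos hend hAN hexv (by omega)⟩
  -- x is injective on leftmost occurrences
  have hnub_inj : ∀ i j : Fin n, nubP x i → nubP x j → x i = x j → i = j := by
    intro i j hi hj heq
    have h1 := nub_eq_fp hi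
    have h2 := nub_eq_fp hj
    rw [h1, h2]
    congr 1
  have hcardN : N.card = m - 1 := by
    have h1 : (N.image x).card = N.card := Finset.card_image_of_injOn
      (fun i hi j hj heq => hnub_inj i j ((hmemN i).1 hi).1 ((hmemN j).1 hj).1 heq)
    rw [himgN, Nat.card_Icc] at h1
    omega
  have hcardS : S.card = m := by
    rw [hS, Finset.card_insert_of_notMem hqN, hcardN]
    omega
  have hqS : q ∈ S := Finset.mem_insert_self q N
  have hSne : S.Nonempty := ⟨q, hqS⟩
  have hmaxS : S.max' hSne = q := by
    apply le_antisymm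
    · have h1 := S.max'_mem hSne
      rcases Finset.mem_insert.1 h1 with h1 | h1
      · exact le_of_eq h1
      · exact le_of_lt (hNq _ h1)
    · exact S.le_max' q hqS
  -- x is strictly increasing along S
  have hmono : ∀ i ∈ S, ∀ j ∈ S, i < j → x i < x j := by
    intro i hi j hj hij
    rw [hS, Finset.mem_insert] at hi hj
    rcases hj with rfl | hj
    · rcases hi with rfl | hi
      · exact absurd hij (lt_irrefl _)
      · rw [hqval]; exact (hNval i hi).2
    · rcases hi with rfl | hi
      · exact absurd (lt_trans (hNq j hj) hij) (lt_irrefl _)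
      · have h1 := (hmemN i).1 hi
        have h2 := (hmemN j).1 hj
        exact nub_mono hend hAN hav h1.1 h2.1 h1.2 hij
  have hinjS : ∀ i ∈ S, ∀ j ∈ S, x i = x j → i = j := by
    intro i hi j hj heq
    rcases lt_trichotomy i j with h | h | h
    · exact absurd heq (ne_of_lt (hmono i hi j hj h))
    · exact h
    · exact absurd heq.symm (ne_of_lt (hmono j hj i hi h))
  refine ⟨S, hS0, by omega, ?_⟩
  funext i
  by_cases hiS : i ∈ S
  · -- value equals the rank in S
    rw [seq_mem hiS]
    have himg2 : (S.filter (fun j => j ≤ i)).image x = Finset.Icc 1 (x i) := by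
      apply Finset.Subset.antisymm
      · intro v hv
        rcases Finset.mem_image.1 hv with ⟨s, hs, rfl⟩
        rw [Finset.mem_filter] at hs
        rw [Finset.mem_Icc]
        refine ⟨(hend s).1, ?_⟩
        rcases lt_or_eq_of_le hs.2 with h | h
        · exact le_of_lt (hmono s hs.1 i hiS h)
        · rw [h]
      · intro v hv
        rw [Finset.mem_Icc] at hv
        have hle := x_le_max (x := x) i
        by_cases hvm : v = m
        · -- then x i = m so i = q
          have hxi : x i = m := by omega
          have hiq : i = q := hinjS i hiS q hqS (by rw [hxi, hqval])
          refine Finset.mem_image.2 ⟨q, ?_, by rw [hqval, hvm]⟩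
          rw [Finset.mem_filter]
          exact ⟨hqS, le_of_eq hiq.symm⟩
        · have hexv : ∃ j, x j = v := hsurj v hv.1 (by omega)
          have hfpN : firstPos x v hexv ∈ N := by
            rw [hmemN]
            exact ⟨fp_nub hexv, fp_pos hend hAN hexv (by omega)⟩
          have hfpS : firstPos x v hexv ∈ S := by
            rw [hS]; exact Finset.mem_insert_of_mem hfpN
          have hfple : firstPos x v hexv ≤ i := by
            by_contra hcon
            push_neg at hcon
            have := hmono i hiS _ hfpS hcon
            rw [fp_val hexv] at this
            omega
          refine Finset.mem_image.2 ⟨firstPos x v hexv, ?_, fp_val hexv⟩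
          rw [Finset.mem_filter]
          exact ⟨hfpS, hfple⟩
    have hcards : ((S.filter (fun j => j ≤ i)).image x).card
        = (S.filter (fun j => j ≤ i)).card :=
      Finset.card_image_of_injOn (fun a ha b hb heq =>
        hinjS a (Finset.mem_filter.1 ha).1 b (Finset.mem_filter.1 hb).1 heq)
    rw [himg2, Nat.card_Icc] at hcards
    have h1 : 1 ≤ x i := (hend i).1
    unfold rank
    omega
  · by_cases hlt : ∃ j ∈ S, i < j
    · have hiq : i < q := by
        obtain ⟨j, hj, hij⟩ := hlt
        rw [hS, Finset.mem_insert] at hj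
        rcases hj with rfl | hj
        · exact hij
        · exact lt_trans hij (hNq j hj)
      rw [seq_lo hSne hiS (by rw [hmaxS]; exact hiq), hcardS]
      by_cases hz : i.1 = 0
      · exact val_zero hend hAN hz
      · have hnn : ¬ nubP x i := by
          intro hnub
          exact hiS (by rw [hS]; exact Finset.mem_insert_of_mem ((hmemN i).2 ⟨hnub, hz⟩))
        exact before_lm hend hsurj hAN hav hm2 hexm hiq hnn
    · have hqi : q < i := by
        push_neg at hlt
        have h1 := hlt q hqS
        rcases lt_or_eq_of_le h1 with h | h
        · exact h
        · exact absurd h.symm (fun hh => hiS (hh ▸ hqS))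
      have hni : ¬ i < S.max' hSne := by rw [hmaxS]; exact not_lt.2 (le_of_lt hqi)
      rw [seq_hi2 (by omega) hSne hiS hni, hcardS]
      exact after_lm hend hsurj hAN hav hm2 hexm hqi

end Backward4
end Stmt13

namespace Stmt13
section Char

variable {n : ℕ}

lemma mem_char {S : Finset (Fin n)} (hS0 : ∀ i ∈ S, 0 < i.1) (hcard : S.card ≠ 1)
    (i : Fin n) :
    i ∈ S ↔ (i.1 ≠ 0 ∧ ((∀ j, j < i → seqOf S j ≠ seqOf S i) ∨
      (1 < seqOf S i ∧ seqOf S i = maxVal n (seqOf S) ∧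
        ∀ j, i < j → seqOf S j ≠ seqOf S i))) := by
  rcases Nat.lt_or_ge S.card 2 with hc | hm
  · have hSe : S = ∅ := Finset.card_eq_zero.1 (by omega)
    subst hSe
    simp only [Finset.notMem_empty, false_iff]
    rintro ⟨hz, h | ⟨h1, -⟩⟩
    · have hn0 : 0 < n := lt_of_le_of_lt (Nat.zero_le _) i.2
      refine h ⟨0, hn0⟩ ?_ ?_
      · rw [Fin.lt_def]
        have : (⟨0, hn0⟩ : Fin n).1 = 0 := rfl
        omega
      · rw [seq_empty]
    · rw [seq_empty] at h1
      simp at h1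
  · have hne : S.Nonempty := Finset.card_pos.1 (by omega)
    set q := S.max' hne with hq
    constructor
    · intro hi
      refine ⟨by have := hS0 i hi; omega, ?_⟩
      by_cases hiq : i = q
      · right
        have hval : seqOf S i = S.card := by
          rw [seq_mem hi, hiq, hq, rank_max' hne]
        refine ⟨by omega, ?_, ?_⟩
        · rw [hval, seq_maxVal hS0 hm]
        · intro j hij
          have hjS : j ∉ S := fun hmem =>
            absurd (S.le_max' j hmem) (not_le.2 (by rw [← hq, ← hiq]; exact hij))
          have hjq : ¬ j < q := not_lt.2 (le_of_lt (by rw [← hiq]; exact hij))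
          rw [seq_hi2 hm hne hjS hjq, hval]
          omega
      · left
        exact (seq_nub_iff hS0 hm i).2 (Or.inr ⟨hi, fun h => hiq (h.trans hq.symm)⟩)
    · rintro ⟨hz, h | ⟨h1, hmax, hafter⟩⟩
      · rcases (seq_nub_iff hS0 hm i).1 h with h' | h'
        · exact absurd h' hz
        · exact h'.1
      · by_contra hiS
        by_cases hlt : i < q
        · have hvq : seqOf S q = S.card := by
            rw [seq_mem (S.max'_mem hne), rank_max' hne]
          have hvi : seqOf S i = S.card := seq_lo hne hiS hlt
          exact hafter q hlt (by rw [hvq, hvi])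
        · have hvi : seqOf S i = S.card - 1 := seq_hi2 hm hne hiS hlt
          rw [hvi, seq_maxVal hS0 hm] at hmax
          omega

end Char
end Stmt13

theorem stmt13 (n : ℕ) (hn : 1 ≤ n) :
    {x : Fin n → ℕ | IsRAS n x ∧ Avoids231 n x}.ncard = 2 ^ (n - 1) - n + 1 := by
  classical
  open Stmt13 in
  set P : Finset (Finset (Fin n)) :=
    (Finset.univ.erase (⟨0, hn⟩ : Fin n)).powerset.filter (fun S => S.card ≠ 1) with hP
  have hmemP : ∀ S : Finset (Fin n), S ∈ P ↔ (∀ i ∈ S, 0 < i.1) ∧ S.card ≠ 1 := by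
    intro S
    rw [hP, Finset.mem_filter, Finset.mem_powerset]
    constructor
    · rintro ⟨hsub, hc⟩
      refine ⟨fun i hi => ?_, hc⟩
      have := Finset.ne_of_mem_erase (hsub hi)
      rcases Nat.eq_zero_or_pos i.1 with h | h
      · exact absurd (Fin.ext h) this
      · exact h
    · rintro ⟨hpos, hc⟩
      refine ⟨fun i hi => Finset.mem_erase.2 ⟨?_, Finset.mem_univ i⟩, hc⟩
      intro h
      have := hpos i hi
      rw [h] at this
      simp at this
  have hseteq : {x : Fin n → ℕ | IsRAS n x ∧ Avoids231 n x} = ↑(P.image seqOf) := by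
    ext x
    simp only [Set.mem_setOf_eq, Finset.coe_image, Set.mem_image, Finset.mem_coe]
    constructor
    · rintro ⟨⟨⟨hend, hsurj⟩, hAN⟩, hav⟩
      have hm1 : 1 ≤ maxVal n x := le_trans (hend ⟨0, hn⟩).1 (x_le_max _)
      have hexm : ∃ i, x i = maxVal n x := by
        obtain ⟨j, -, hj⟩ := Finset.exists_mem_eq_sup Finset.univ
          ⟨(⟨0, hn⟩ : Fin n), Finset.mem_univ _⟩ x
        exact ⟨j, hj.symm⟩
      rcases Nat.lt_or_ge (maxVal n x) 2 with hm | hm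
      · -- maxVal = 1 : x is constant 1
        refine ⟨∅, (hmemP ∅).2 ⟨by simp, by simp⟩, ?_⟩
        rw [seq_empty]
        funext i
        have h1 := (hend i).1
        have h2 := x_le_max (x := x) i
        omega
      · obtain ⟨S, hS0, hc2, hxS⟩ := bwd_main hend hsurj hAN hav hm hexm
        exact ⟨S, (hmemP S).2 ⟨hS0, by omega⟩, hxS.symm⟩
    · rintro ⟨S, hSP, rfl⟩
      obtain ⟨hS0, hc⟩ := (hmemP S).1 hSP
      rcases Nat.lt_or_ge S.card 2 with hcc | hcc
      · have hSe : S = ∅ := Finset.card_eq_zero.1 (by omega)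
        subst hSe
        exact ⟨seq_empty_isRAS hn, seq_empty_avoids⟩
      · exact ⟨seq_isRAS hS0 hcc, seq_avoids hcc⟩
  rw [hseteq, Set.ncard_coe_finset]
  have hinj : Set.InjOn seqOf (↑P : Set (Finset (Fin n))) := by
    intro S hS T hT heq
    rw [Finset.mem_coe, hmemP] at hS hT
    ext i
    rw [mem_char hS.1 hS.2 i, mem_char hT.1 hT.2 i, heq]
  rw [Finset.card_image_of_injOn hinj]
  -- count: subsets of an (n-1)-element set with card ≠ 1
  have hcard_erase : (Finset.univ.erase (⟨0, hn⟩ : Fin n)).card = n - 1 := by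
    rw [Finset.card_erase_of_mem (Finset.mem_univ _), Finset.card_fin]
  have hsplit := Finset.card_filter_add_card_filter_not
    (s := (Finset.univ.erase (⟨0, hn⟩ : Fin n)).powerset) (p := fun S => S.card = 1)
  have hpow : (Finset.univ.erase (⟨0, hn⟩ : Fin n)).powerset.card = 2 ^ (n - 1) := by
    rw [Finset.card_powerset, hcard_erase]
  have hone : ((Finset.univ.erase (⟨0, hn⟩ : Fin n)).powerset.filter
      (fun S => S.card = 1)).card = n - 1 := by
    rw [← Finset.powersetCard_eq_filter, Finset.card_powersetCard, hcard_erase,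
      Nat.choose_one_right]
  have hPcard : P.card = 2 ^ (n - 1) - (n - 1) := by
    rw [hP]
    have : ((Finset.univ.erase (⟨0, hn⟩ : Fin n)).powerset.filter
        (fun S => ¬ S.card = 1)).card = 2 ^ (n - 1) - (n - 1) := by
      omega
    convert this using 2
  have h2 : n - 1 < 2 ^ (n - 1) := Nat.lt_two_pow_self
  omega
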